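/- One complete iteration of the modified K-plane regression algorithm does not increase the error function: if Θ^{c+1} is obtained from Θ^c by (i) forming sets S_k^c via argmin assignment with parameters Θ^c, (ii) setting w̃_k^{c+1} to the least-squares minimizer over S_k^c and μ_k^{c+1} to the centroid of {x_n : n ∈ S_k^c}, then E(Θ^{c+1}) ≤ E(Θ^c), where E(Θ) = Σ_{n=1}^N min_{k∈{1,...,K}} [(w̃_kᵀx̃_n − y_n)² + γ||x_n − μ_k||²]. -/

import Mathlib

open Matrix

lemma mean_min {N : ℕ} (S : Finset (Fin N)) (hS : S.Nonempty) (a : Fin N → ℝ) (m : ℝ) :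
    ∑ n ∈ S, (a n - (∑ n ∈ S, a n) / S.card) ^ 2 ≤ ∑ n ∈ S, (a n - m) ^ 2 := by
  set μ := (∑ n ∈ S, a n) / S.card with hμdef
  have hcard : (0:ℝ) < S.card := by exact_mod_cast Finset.card_pos.mpr hS
  have hsum : ∑ n ∈ S, (a n - μ) = 0 := by
    rw [Finset.sum_sub_distrib, Finset.sum_const, nsmul_eq_mul, hμdef]
    field_simp
    ring
  have hexp : ∑ n ∈ S, (a n - m) ^ 2
      = ∑ n ∈ S, (a n - μ) ^ 2 + (2*(μ - m)) * (∑ n ∈ S, (a n - μ))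
        + S.card * (μ - m) ^ 2 := by
    rw [Finset.mul_sum, ← Finset.sum_add_distrib]
    rw [show ((S.card : ℝ) * (μ - m) ^ 2) = ∑ _n ∈ S, (μ - m)^2 by
      rw [Finset.sum_const, nsmul_eq_mul]]
    rw [← Finset.sum_add_distrib]
    exact Finset.sum_congr rfl fun n _ => by ring
  rw [hexp, hsum]
  nlinarith [sq_nonneg (μ - m), hcard]

lemma ls_min {d N : ℕ} (S : Finset (Fin N)) (xt : Fin N → Fin (d+1) → ℝ) (y : Fin N → ℝ)
    (A : Matrix (Fin (d+1)) (Fin (d+1)) ℝ)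
    (hA : A = ∑ n ∈ S, Matrix.of (fun i j => xt n i * xt n j))
    (hInv : IsUnit A)
    (ws : Fin (d+1) → ℝ) (hw : ws = A⁻¹ *ᵥ (∑ n ∈ S, y n • xt n))
    (w : Fin (d+1) → ℝ) :
    ∑ n ∈ S, ((∑ i, ws i * xt n i) - y n) ^ 2 ≤ ∑ n ∈ S, ((∑ i, w i * xt n i) - y n) ^ 2 := by
  have hAw : A *ᵥ ws = ∑ n ∈ S, y n • xt n := by
    rw [hw, Matrix.mulVec_mulVec, Matrix.mul_nonsing_inv _ ((Matrix.isUnit_iff_isUnit_det A).mp hInv), Matrix.one_mulVec]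
  have key : ∀ i, ∑ n ∈ S, xt n i * ((∑ j, ws j * xt n j) - y n) = 0 := by
    intro i
    have h1 := congrFun hAw i
    have h2 : (A *ᵥ ws) i = ∑ n ∈ S, xt n i * (∑ j, ws j * xt n j) := by
      simp only [Matrix.mulVec, dotProduct, hA, Matrix.sum_apply,
        Matrix.of_apply, Finset.sum_mul]
      rw [Finset.sum_comm]
      exact Finset.sum_congr rfl fun n _ => by
        rw [Finset.mul_sum]; exact Finset.sum_congr rfl fun j _ => by ring
    have h3 : (∑ n ∈ S, y n • xt n) i = ∑ n ∈ S, xt n i * y n := by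
      simp [Finset.sum_apply, mul_comm]
    have h4 : ∑ n ∈ S, xt n i * ((∑ j, ws j * xt n j) - y n)
        = (A *ᵥ ws) i - (∑ n ∈ S, y n • xt n) i := by
      rw [h2, h3, ← Finset.sum_sub_distrib]
      exact Finset.sum_congr rfl fun n _ => by ring
    rw [h4, h1, sub_self]
  have hcross : ∑ n ∈ S, ((∑ j, ws j * xt n j) - y n) * (∑ i, (w i - ws i) * xt n i) = 0 := by
    calc ∑ n ∈ S, ((∑ j, ws j * xt n j) - y n) * (∑ i, (w i - ws i) * xt n i)
        = ∑ n ∈ S, ∑ i, (w i - ws i) * (xt n i * ((∑ j, ws j * xt n j) - y n)) := by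
          refine Finset.sum_congr rfl fun n _ => ?_
          rw [Finset.mul_sum]
          exact Finset.sum_congr rfl fun i _ => by ring
      _ = ∑ i, ∑ n ∈ S, (w i - ws i) * (xt n i * ((∑ j, ws j * xt n j) - y n)) :=
          Finset.sum_comm
      _ = 0 := by
          refine Finset.sum_eq_zero fun i _ => ?_
          rw [← Finset.mul_sum, key i, mul_zero]
  have expand : ∀ n ∈ S, ((∑ i, w i * xt n i) - y n) ^ 2
      = ((∑ i, ws i * xt n i) - y n) ^ 2
        + 2 * (((∑ j, ws j * xt n j) - y n) * (∑ i, (w i - ws i) * xt n i))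
        + (∑ i, (w i - ws i) * xt n i) ^ 2 := by
    intro n _
    have : (∑ i, w i * xt n i) = (∑ i, ws i * xt n i) + (∑ i, (w i - ws i) * xt n i) := by
      rw [← Finset.sum_add_distrib]; exact Finset.sum_congr rfl fun i _ => by ring
    rw [this]; ring
  rw [Finset.sum_congr rfl expand, Finset.sum_add_distrib, Finset.sum_add_distrib,
    ← Finset.mul_sum, hcross]
  have : 0 ≤ ∑ n ∈ S, (∑ i, (w i - ws i) * xt n i) ^ 2 :=
    Finset.sum_nonneg fun n _ => sq_nonneg _
  linarith


/-- Theorem 1: one complete iteration of modified K-plane regression does not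
increase the error function `E(Θ) = ∑ₙ min_k [(w̃ₖᵀx̃ₙ - yₙ)² + γ‖xₙ - μₖ‖²]`. -/
theorem modified_kplane_monotone_decrease (d N K : ℕ) (hK : 0 < K)
    (γ : ℝ) (hγ : 0 < γ)
    (x : Fin N → (Fin d → ℝ)) (y : Fin N → ℝ)
    (xt : Fin N → (Fin (d + 1) → ℝ))
    (hxt : ∀ n, xt n = Fin.snoc (x n) 1)
    (wc : Fin K → (Fin (d + 1) → ℝ)) (μc : Fin K → (Fin d → ℝ))
    (costc : Fin K → Fin N → ℝ)
    (hcostc : ∀ k n, costc k n =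
      ((∑ i, wc k i * xt n i) - y n) ^ 2 + γ * ∑ i, (x n i - μc k i) ^ 2)
    -- (i) argmin assignment with parameters Θᶜ, ties broken by least index
    (Sc : Fin K → Finset (Fin N))
    (hSc : ∀ k, Sc k = Finset.univ.filter
      (fun n => (∀ j, costc k n ≤ costc j n) ∧ ∀ j, j < k → costc k n < costc j n))
    (hne : ∀ k, (Sc k).Nonempty)
    -- (ii) least-squares and centroid updates
    (A : Fin K → Matrix (Fin (d + 1)) (Fin (d + 1)) ℝ)
    (hA : ∀ k, A k = ∑ n ∈ Sc k, Matrix.of (fun i j => xt n i * xt n j))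
    (hInv : ∀ k, IsUnit (A k))
    (wc1 : Fin K → (Fin (d + 1) → ℝ)) (μc1 : Fin K → (Fin d → ℝ))
    (hw : ∀ k, wc1 k = (A k)⁻¹ *ᵥ (∑ n ∈ Sc k, y n • xt n))
    (hμ : ∀ k i, μc1 k i = (∑ n ∈ Sc k, x n i) / (Sc k).card) :
    ∑ n : Fin N, Finset.univ.inf' ⟨⟨0, hK⟩, Finset.mem_univ _⟩
        (fun k => ((∑ i, wc1 k i * xt n i) - y n) ^ 2
          + γ * ∑ i, (x n i - μc1 k i) ^ 2)
      ≤ ∑ n : Fin N, Finset.univ.inf' ⟨⟨0, hK⟩, Finset.mem_univ _⟩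
        (fun k => costc k n) := by
  classical
  set newcost : Fin K → Fin N → ℝ := fun k n =>
    ((∑ i, wc1 k i * xt n i) - y n) ^ 2 + γ * ∑ i, (x n i - μc1 k i) ^ 2 with hnew
  -- every point is assigned to some cluster
  have hexists : ∀ n, ∃ k, n ∈ Sc k := by
    intro n
    have hT : (Finset.univ.filter (fun k : Fin K => ∀ j, costc k n ≤ costc j n)).Nonempty := by
      obtain ⟨k0, -, hk0⟩ := Finset.exists_min_image Finset.univ (fun k => costc k n)
        ⟨⟨0, hK⟩, Finset.mem_univ _⟩
      exact ⟨k0, Finset.mem_filter.mpr ⟨Finset.mem_univ _, fun j => hk0 j (Finset.mem_univ _)⟩⟩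
    set T := Finset.univ.filter (fun k : Fin K => ∀ j, costc k n ≤ costc j n) with hT'
    refine ⟨T.min' hT, ?_⟩
    have hmem := T.min'_mem hT
    have hPk : ∀ j, costc (T.min' hT) n ≤ costc j n := (Finset.mem_filter.mp hmem).2
    rw [hSc]
    refine Finset.mem_filter.mpr ⟨Finset.mem_univ _, hPk, fun j hj => ?_⟩
    have hjT : j ∉ T := fun h => absurd (Finset.min'_le T j h) (not_le.mpr hj)
    have : ¬ ∀ j', costc j n ≤ costc j' n := fun h =>
      hjT (Finset.mem_filter.mpr ⟨Finset.mem_univ _, h⟩)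
    push_neg at this
    obtain ⟨j', hj'⟩ := this
    exact lt_of_le_of_lt (hPk j') hj'
  choose σ hσ using hexists
  -- membership characterization
  have hmemSc : ∀ k n, n ∈ Sc k →
      (∀ j, costc k n ≤ costc j n) ∧ ∀ j, j < k → costc k n < costc j n := by
    intro k n hn; rw [hSc] at hn; exact (Finset.mem_filter.mp hn).2
  have hfiber : ∀ k, Finset.univ.filter (fun n => σ n = k) = Sc k := by
    intro k
    ext n
    simp only [Finset.mem_filter, Finset.mem_univ, true_and]
    constructor
    · rintro rfl; exact hσ n
    · intro hn
      by_contra hne'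
      rcases lt_or_gt_of_ne hne' with h | h
      · have h1 := (hmemSc _ n (hσ n)).1 k
        have h2 := (hmemSc k n hn).2 _ h
        linarith
      · have h1 := (hmemSc k n hn).1 (σ n)
        have h2 := (hmemSc _ n (hσ n)).2 _ h
        linarith
  -- rewrite RHS as sum of assigned costs
  have hRHS : ∑ n : Fin N, Finset.univ.inf' ⟨⟨0, hK⟩, Finset.mem_univ _⟩
      (fun k => costc k n) = ∑ k : Fin K, ∑ n ∈ Sc k, costc k n := by
    have h1 : ∀ n : Fin N, Finset.univ.inf' ⟨⟨0, hK⟩, Finset.mem_univ _⟩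
        (fun k => costc k n) = costc (σ n) n := by
      intro n
      refine le_antisymm (Finset.inf'_le _ (Finset.mem_univ _)) ?_
      exact Finset.le_inf' _ _ fun k _ => (hmemSc _ n (hσ n)).1 k
    rw [Finset.sum_congr rfl fun n _ => h1 n]
    rw [← Finset.sum_fiberwise Finset.univ σ (fun n => costc (σ n) n)]
    refine Finset.sum_congr rfl fun k _ => ?_
    refine Finset.sum_congr (hfiber k) fun n hn => ?_
    rw [← hfiber k, Finset.mem_filter] at hn
    rw [hn.2]
  -- bound LHS by sum of assigned new costs
  have hLHS : ∑ n : Fin N, Finset.univ.inf' ⟨⟨0, hK⟩, Finset.mem_univ _⟩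
      (fun k => newcost k n) ≤ ∑ k : Fin K, ∑ n ∈ Sc k, newcost k n := by
    have h1 : ∀ n : Fin N, Finset.univ.inf' ⟨⟨0, hK⟩, Finset.mem_univ _⟩
        (fun k => newcost k n) ≤ newcost (σ n) n :=
      fun n => Finset.inf'_le _ (Finset.mem_univ _)
    calc ∑ n : Fin N, Finset.univ.inf' ⟨⟨0, hK⟩, Finset.mem_univ _⟩
          (fun k => newcost k n)
        ≤ ∑ n : Fin N, newcost (σ n) n := Finset.sum_le_sum fun n _ => h1 n
      _ = ∑ k : Fin K, ∑ n ∈ Sc k, newcost k n := by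
          rw [← Finset.sum_fiberwise Finset.univ σ (fun n => newcost (σ n) n)]
          refine Finset.sum_congr rfl fun k _ => ?_
          refine Finset.sum_congr (hfiber k) fun n hn => ?_
          rw [← hfiber k, Finset.mem_filter] at hn
          rw [hn.2]
  -- per-cluster decrease
  have hcluster : ∀ k, ∑ n ∈ Sc k, newcost k n ≤ ∑ n ∈ Sc k, costc k n := by
    intro k
    have hreg : ∑ n ∈ Sc k, ((∑ i, wc1 k i * xt n i) - y n) ^ 2
        ≤ ∑ n ∈ Sc k, ((∑ i, wc k i * xt n i) - y n) ^ 2 :=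
      ls_min (Sc k) xt y (A k) (hA k) (hInv k) (wc1 k) (hw k) (wc k)
    have hcen : ∑ n ∈ Sc k, ∑ i, (x n i - μc1 k i) ^ 2
        ≤ ∑ n ∈ Sc k, ∑ i, (x n i - μc k i) ^ 2 := by
      rw [Finset.sum_comm, Finset.sum_comm (s := Sc k)]
      refine Finset.sum_le_sum fun i _ => ?_
      have h := mean_min (Sc k) (hne k) (fun n => x n i) (μc k i)
      simp only [hμ k i]
      exact h
    have : ∑ n ∈ Sc k, newcost k n
        = (∑ n ∈ Sc k, ((∑ i, wc1 k i * xt n i) - y n) ^ 2)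
          + γ * ∑ n ∈ Sc k, ∑ i, (x n i - μc1 k i) ^ 2 := by
      rw [Finset.mul_sum, ← Finset.sum_add_distrib]
    rw [this]
    have hc : ∑ n ∈ Sc k, costc k n
        = (∑ n ∈ Sc k, ((∑ i, wc k i * xt n i) - y n) ^ 2)
          + γ * ∑ n ∈ Sc k, ∑ i, (x n i - μc k i) ^ 2 := by
      rw [Finset.mul_sum, ← Finset.sum_add_distrib]
      exact Finset.sum_congr rfl fun n _ => hcostc k n
    rw [hc]
    have := mul_le_mul_of_nonneg_left hcen (le_of_lt hγ)
    linarith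
  calc ∑ n : Fin N, Finset.univ.inf' ⟨⟨0, hK⟩, Finset.mem_univ _⟩
        (fun k => newcost k n)
      ≤ ∑ k : Fin K, ∑ n ∈ Sc k, newcost k n := hLHS
    _ ≤ ∑ k : Fin K, ∑ n ∈ Sc k, costc k n := Finset.sum_le_sum fun k _ => hcluster k
    _ = ∑ n : Fin N, Finset.univ.inf' ⟨⟨0, hK⟩, Finset.mem_univ _⟩
        (fun k => costc k n) := hRHS.symm
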